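/- Let n ≥ 1, t ≥ 1 and k ≥ 1, let a_0, a_t be elements of a commutative ring with unity, and let d = gcd(n,t). Then per((a_0·I_n + a_t·P_n^t) ⊗ J_k) = [ (k!)^{n/d} · Σ_{l=0}^{k} C(k,l)^{n/d} · (a_0^{k−l} a_t^{l})^{n/d} ]^d. -/

import Mathlib

open scoped BigOperators
open Kronecker

/-- The permanent of a rectangular matrix: the sum over all injections of the
row index set into the column index set of the corresponding products. -/
noncomputable def rectPer {R : Type*} [CommRing R] {ι κ : Type*} [Fintype ι] [Fintype κ]
    [DecidableEq ι] [DecidableEq κ] (A : Matrix ι κ R) : R :=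
  ∑ σ : ι ↪ κ, ∏ i, A i (σ i)

/-- The `n × n` circulant `(0,1)` matrix `P_n`, with `(i,j)` entry `1` iff `j − i ≡ 1 (mod n)`. -/
def Pcirc (R : Type*) [CommRing R] (n : ℕ) [NeZero n] : Matrix (Fin n) (Fin n) R :=
  Matrix.of fun i j => if j = i + 1 then 1 else 0

open scoped Fin.NatCast Fin.IntCast Fin.CommRing

section Aux

open Finset

variable {R : Type*} [CommRing R]

lemma rectPer_eq_sum_perm {ι : Type*} [Fintype ι] [DecidableEq ι] (A : Matrix ι ι R) :
    rectPer A = ∑ σ : Equiv.Perm ι, ∏ i, A i (σ i) := by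
  rw [rectPer]
  refine (Fintype.sum_bijective (Equiv.toEmbedding) ?_ _ _ (fun σ => rfl)).symm
  constructor
  · intro a b h
    ext x
    exact DFunLike.congr_fun h x
  · intro f
    exact ⟨Equiv.ofBijective f ((Finite.injective_iff_bijective).1 f.injective), by ext x; rfl⟩

lemma Pcirc_pow_apply (n : ℕ) [NeZero n] (t : ℕ) (i j : Fin n) :
    ((Pcirc R n) ^ t) i j = if j = i + (t : Fin n) then 1 else 0 := by
  induction t generalizing j with
  | zero => simp [Matrix.one_apply, eq_comm]
  | succ t ih =>
    rw [pow_succ, Matrix.mul_apply]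
    simp only [ih]
    simp only [Pcirc, Matrix.of_apply, ite_mul, one_mul, zero_mul]
    rw [Finset.sum_ite_eq' Finset.univ (i + (t : Fin n)) (fun x => if j = x + 1 then (1:R) else 0)]
    simp only [Finset.mem_univ, if_true]
    have : ((t + 1 : ℕ) : Fin n) = (t : Fin n) + 1 := by push_cast; ring
    rw [this, ← add_assoc]

lemma card_block (n k : ℕ) [NeZero n] (j : Fin n) :
    (Finset.univ.filter fun y : Fin n × Fin k => y.1 = j).card = k := by
  have : (Finset.univ.filter fun y : Fin n × Fin k => y.1 = j) = {j} ×ˢ Finset.univ := by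
    ext ⟨i, p⟩
    simp [Finset.mem_product, Prod.ext_iff, eq_comm]
  rw [this, Finset.card_product]
  simp

/-- Permutations matching a prescribed fiber function correspond to families of
bijections between fibers. -/
def permFiberEquiv {ι κ : Type*} [DecidableEq κ] (f g : ι → κ) :
    {σ : Equiv.Perm ι // ∀ x, f (σ x) = g x} ≃ ((j : κ) → ({x // g x = j} ≃ {y // f y = j})) where
  toFun σ j :=
    { toFun := fun x => ⟨σ.1 x.1, by rw [σ.2]; exact x.2⟩
      invFun := fun y => ⟨σ.1.symm y.1, by
        have h := σ.2 (σ.1.symm y.1)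
        rw [Equiv.apply_symm_apply] at h
        rw [← h]; exact y.2⟩
      left_inv := fun x => by
        apply Subtype.ext; simp
      right_inv := fun y => by
        apply Subtype.ext; simp }
  invFun e :=
    ⟨{ toFun := fun x => (e (g x) ⟨x, rfl⟩).1
       invFun := fun y => ((e (f y)).symm ⟨y, rfl⟩).1
       left_inv := by
         have key : ∀ (j : κ) (z : ι) (hz : f z = j) (x : {x // g x = j}),
             e j x = ⟨z, hz⟩ → ((e (f z)).symm ⟨z, rfl⟩).1 = x.1 := by
           intro j z hz
           subst hz
           intro x hx
           rw [← hx, Equiv.symm_apply_apply]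
         intro x
         exact key (g x) _ (e (g x) ⟨x, rfl⟩).2 ⟨x, rfl⟩ (Subtype.ext rfl)
       right_inv := by
         have key : ∀ (j : κ) (z : ι) (hz : g z = j) (y : {y // f y = j}),
             (e j).symm y = ⟨z, hz⟩ → (e (g z) ⟨z, rfl⟩).1 = y.1 := by
           intro j z hz
           subst hz
           intro y hy
           rw [← hy, Equiv.apply_symm_apply]
         intro y
         exact key (f y) _ ((e (f y)).symm ⟨y, rfl⟩).2 ⟨y, rfl⟩ (Subtype.ext rfl) },
     fun x => (e (g x) ⟨x, rfl⟩).2⟩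
  left_inv σ := by
    apply Subtype.ext
    ext x
    rfl
  right_inv e := by
    funext j
    apply Equiv.ext
    intro x
    apply Subtype.ext
    have key : ∀ (j' : κ) (z : ι) (hz : g z = j'), (e (g z) ⟨z, rfl⟩).1 = (e j' ⟨z, hz⟩).1 := by
      intro j' z hz
      subst hz
      rfl
    exact key j x.1 x.2

lemma count_lemma (n k : ℕ) [NeZero n] (g : Fin n × Fin k → Fin n) :
    (∑ σ : Equiv.Perm (Fin n × Fin k), ∏ x, (if (σ x).1 = g x then (1 : R) else 0))
      = if (∀ j, (Finset.univ.filter fun x => g x = j).card = k)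
          then ((k.factorial : R)) ^ n else 0 := by
  classical
  have h1 : ∀ σ : Equiv.Perm (Fin n × Fin k),
      (∏ x, (if (σ x).1 = g x then (1:R) else 0)) = if (∀ x, (σ x).1 = g x) then 1 else 0 :=
    fun σ => Fintype.prod_boole
  simp only [h1]
  rw [Finset.sum_boole]
  by_cases H : ∀ j, (Finset.univ.filter fun x => g x = j).card = k
  · rw [if_pos H]
    have hcard : (Finset.univ.filter fun σ : Equiv.Perm (Fin n × Fin k) =>
          ∀ x, (σ x).1 = g x).card
        = Fintype.card {σ : Equiv.Perm (Fin n × Fin k) // ∀ x, (σ x).1 = g x} :=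
      (Fintype.card_subtype _).symm
    rw [hcard, Fintype.card_congr (permFiberEquiv Prod.fst g), Fintype.card_pi]
    have hfib : ∀ j, Fintype.card {x : Fin n × Fin k // g x = j} = k := by
      intro j; rw [Fintype.card_subtype]; exact H j
    have hblk : ∀ j, Fintype.card {y : Fin n × Fin k // y.1 = j} = k := by
      intro j; rw [Fintype.card_subtype]; exact card_block n k j
    have hfac : ∀ j : Fin n,
        Fintype.card ({x : Fin n × Fin k // g x = j} ≃ {y : Fin n × Fin k // y.1 = j})
          = k.factorial := by
      intro j
      have e : {x : Fin n × Fin k // g x = j} ≃ {y : Fin n × Fin k // y.1 = j} :=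
        Fintype.equivOfCardEq (by rw [hfib, hblk])
      rw [Fintype.card_equiv e, hfib]
    simp only [hfac]
    push_cast
    rw [Finset.prod_const, Finset.card_univ, Fintype.card_fin]
  · rw [if_neg H]
    push_neg at H
    obtain ⟨j, hj⟩ := H
    have hempty : (Finset.univ.filter fun σ : Equiv.Perm (Fin n × Fin k) =>
        ∀ x, (σ x).1 = g x) = ∅ := by
      rw [Finset.filter_eq_empty_iff]
      intro σ _ hσ
      apply hj
      refine Eq.trans ?_ (card_block n k j)
      apply Finset.card_bij (fun x _ => σ x)
      · intro x hx
        simp only [Finset.mem_filter, Finset.mem_univ, true_and] at hx ⊢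
        rw [hσ x, hx]
      · intro a _ b _ hab
        exact σ.injective hab
      · intro y hy
        simp only [Finset.mem_filter, Finset.mem_univ, true_and] at hy ⊢
        refine ⟨σ.symm y, ?_, Equiv.apply_symm_apply σ y⟩
        have := hσ (σ.symm y)
        rw [Equiv.apply_symm_apply] at this
        rw [← this, hy]
    rw [hempty]
    simp

lemma exists_mul_t (n t : ℕ) [NeZero n] (i j : Fin n)
    (h : (i : ℕ) % (n.gcd t) = (j : ℕ) % (n.gcd t)) :
    ∃ s : ℕ, j = i + (s : Fin n) * (t : Fin n) := by
  set d := n.gcd t with hd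
  have hdn : d ∣ n := Nat.gcd_dvd_left n t
  have hle : (i : ℕ) ≤ (j : ℕ) + n := le_trans (le_of_lt i.2) (Nat.le_add_left n j)
  obtain ⟨q, hq⟩ := hdn
  have h2' : ∀ a : ℕ, (a + n) % d = a % d := by
    intro a; rw [hq]; exact Nat.add_mul_mod_self_left _ _ _
  have h2 : ((j:ℕ) + n) % d = (j:ℕ) % d := h2' _
  have hdvd : d ∣ ((j:ℕ) + n - (i:ℕ)) := by
    apply (Nat.modEq_iff_dvd' hle).mp
    unfold Nat.ModEq
    rw [h2, ← h]
  set e := ((j:ℕ) + n - (i:ℕ)) / d with he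
  have hed : d * e = (j:ℕ) + n - (i:ℕ) := Nat.mul_div_cancel' hdvd
  have h0 : ((n:ℤ) : Fin n) = 0 := by
    push_cast
    simp
  have hb := Nat.gcd_eq_gcd_ab n t
  have hbez : (d : Fin n) = (t : Fin n) * (((Nat.gcdB n t) : ℤ) : Fin n) := by
    calc (d : Fin n) = ((d:ℤ) : Fin n) := by push_cast; rfl
    _ = (((n:ℤ) * Nat.gcdA n t + (t:ℤ) * Nat.gcdB n t : ℤ) : Fin n) := by
        rw [← hb]
    _ = ((n:ℤ):Fin n) * ((Nat.gcdA n t : ℤ) : Fin n)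
          + ((t:ℤ):Fin n) * ((Nat.gcdB n t : ℤ) : Fin n) := by push_cast; ring
    _ = (t : Fin n) * (((Nat.gcdB n t):ℤ) : Fin n) := by rw [h0]; push_cast; ring
  set B := (((Nat.gcdB n t) : ℤ) : Fin n) with hB
  have hji : ((d * e : ℕ) : Fin n) = j - i := by
    rw [hed, Nat.cast_sub hle]
    push_cast
    simp [Fin.cast_val_eq_self]
  refine ⟨(((e : Fin n)) * B).val, ?_⟩
  rw [Fin.cast_val_eq_self]
  have hkey : (e:Fin n) * B * (t:Fin n) = j - i := by
    calc (e:Fin n) * B * (t:Fin n) = (e:Fin n) * ((t:Fin n) * B) := by ring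
    _ = (e:Fin n) * (d:Fin n) := by rw [← hbez]
    _ = ((d*e : ℕ) : Fin n) := by push_cast; ring
    _ = j - i := hji
  rw [hkey]
  ring

lemma const_of_periodic (n t : ℕ) [NeZero n] (c : Fin n → ℕ)
    (hc : ∀ j, c (j + (t : Fin n)) = c j) :
    ∀ i j : Fin n, (i : ℕ) % (n.gcd t) = (j : ℕ) % (n.gcd t) → c i = c j := by
  have step : ∀ (s : ℕ) (i : Fin n), c (i + (s : Fin n) * (t : Fin n)) = c i := by
    intro s
    induction s with
    | zero => intro i; simp
    | succ s ih =>
      intro i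
      have hcast : ((s+1 : ℕ) : Fin n) * (t:Fin n) = (s : Fin n) * (t:Fin n) + (t:Fin n) := by
        push_cast; ring
      rw [hcast, ← add_assoc, hc (i + (s:Fin n) * (t:Fin n))]
      exact ih i
  intro i j h
  obtain ⟨s, hs⟩ := exists_mul_t n t i j h
  rw [hs, step]

lemma mod_fiber_card (n d : ℕ) [NeZero n] (hd : d ∣ n) (hd0 : 0 < d) (r : Fin d) :
    (Finset.univ.filter fun i : Fin n => (i : ℕ) % d = (r : ℕ)).card = n / d := by
  obtain ⟨m, hm⟩ := hd
  have hn0 : 0 < n := Nat.pos_of_ne_zero (NeZero.ne n)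
  have hm0 : 0 < m := by
    rcases Nat.eq_zero_or_pos m with h | h
    · rw [h, Nat.mul_zero] at hm; omega
    · exact h
  have hnd : n / d = m := by rw [hm, Nat.mul_div_cancel_left _ hd0]
  rw [hnd, ← Fintype.card_fin m, ← Finset.card_univ]
  apply Finset.card_bij' (fun (i : Fin n) _ => (⟨(i : ℕ) / d, by
      apply Nat.div_lt_of_lt_mul
      rw [← hm]
      exact i.2⟩ : Fin m))
    (fun (q : Fin m) _ => (⟨(r : ℕ) + d * (q : ℕ), by
      calc (r:ℕ) + d * (q:ℕ) < d + d * (q:ℕ) := by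
            exact Nat.add_lt_add_right r.2 _
      _ = d * ((q:ℕ) + 1) := by ring
      _ ≤ d * m := Nat.mul_le_mul_left d q.2
      _ = n := hm.symm⟩ : Fin n))
  · intro i hi
    simp only [Finset.mem_filter, Finset.mem_univ, true_and] at hi
    apply Fin.ext
    simp only
    rw [← hi]
    exact Nat.mod_add_div _ _
  · intro q _
    apply Fin.ext
    simp only
    rw [Nat.add_mul_div_left _ _ hd0, Nat.div_eq_of_lt r.2, Nat.zero_add]
  · intro i hi
    exact Finset.mem_univ _
  · intro q _
    simp only [Finset.mem_filter, Finset.mem_univ, true_and]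
    rw [Nat.add_mul_mod_self_left, Nat.mod_eq_of_lt r.2]

lemma periodic_sum (n t k : ℕ) [NeZero n] (W : ℕ → R) :
    (∑ c ∈ Fintype.piFinset (fun _ : Fin n => Finset.range (k + 1)),
      (if (∀ j, c (j + (t : Fin n)) = c j) then ∏ i, W (c i) else 0))
    = (∑ l ∈ Finset.range (k + 1), W l ^ (n / n.gcd t)) ^ (n.gcd t) := by
  classical
  set d := n.gcd t with hd
  have hdn : d ∣ n := Nat.gcd_dvd_left n t
  have hdt : d ∣ t := Nat.gcd_dvd_right n t
  have hn0 : 0 < n := Nat.pos_of_ne_zero (NeZero.ne n)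
  have hd0 : 0 < d := Nat.gcd_pos_of_pos_left t hn0
  have hdlen : d ≤ n := Nat.le_of_dvd hn0 hdn
  have hval : ∀ (j : Fin n), ((j + (t : Fin n)) : Fin n).val % d = j.val % d := by
    intro j
    rw [Fin.val_add, Fin.val_natCast]
    rw [Nat.mod_mod_of_dvd _ hdn, Nat.add_mod, Nat.mod_mod_of_dvd _ hdn]
    have ht0 : t % d = 0 := by
      obtain ⟨u, hu⟩ := hdt; rw [hu]; exact Nat.mul_mod_right d u
    simp [ht0]
  rw [← Finset.sum_filter]
  have main : (∑ c ∈ (Fintype.piFinset (fun _ : Fin n => Finset.range (k + 1))).filter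
        (fun c => ∀ j, c (j + (t : Fin n)) = c j), ∏ i, W (c i))
      = ∑ h ∈ Fintype.piFinset (fun _ : Fin d => Finset.range (k + 1)),
          ∏ r : Fin d, W (h r) ^ (n / d) := by
    apply Finset.sum_nbij' (i := fun c => fun r : Fin d => c ⟨r.1, lt_of_lt_of_le r.2 hdlen⟩)
      (j := fun h => fun i : Fin n => h ⟨(i : ℕ) % d, Nat.mod_lt _ hd0⟩)
    · intro c hc
      rw [Finset.mem_filter] at hc
      rw [Fintype.mem_piFinset]
      intro r
      exact Fintype.mem_piFinset.mp hc.1 _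
    · intro h hh
      rw [Finset.mem_filter]
      constructor
      · rw [Fintype.mem_piFinset]
        intro i
        exact Fintype.mem_piFinset.mp hh _
      · intro j
        exact congrArg h (Fin.ext (hval j))
    · intro c hc
      rw [Finset.mem_filter] at hc
      funext i
      exact const_of_periodic n t c hc.2 ⟨(i : ℕ) % d, lt_of_lt_of_le (Nat.mod_lt _ hd0) hdlen⟩ i
        (Nat.mod_mod_of_dvd _ (dvd_refl d))
    · intro h hh
      funext r
      exact congrArg h (Fin.ext (Nat.mod_eq_of_lt r.2))
    · intro c hc
      rw [Finset.mem_filter] at hc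
      -- ∏ i, W (c i) = ∏ r, W (c ⟨r.1, _⟩) ^ (n / d)
      have hrw : ∀ i : Fin n, c i = c ⟨(i : ℕ) % d, lt_of_lt_of_le (Nat.mod_lt _ hd0) hdlen⟩ := by
        intro i
        apply const_of_periodic n t c hc.2
        exact (Nat.mod_mod_of_dvd _ (dvd_refl d)).symm
      calc (∏ i, W (c i)) = ∏ i : Fin n, W (c ⟨(i : ℕ) % d, lt_of_lt_of_le (Nat.mod_lt _ hd0) hdlen⟩) := by
            apply Finset.prod_congr rfl
            intro i _
            rw [← hrw i]
      _ = ∏ r : Fin d, ∏ i ∈ Finset.univ.filter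
            (fun i : Fin n => (⟨(i : ℕ) % d, Nat.mod_lt _ hd0⟩ : Fin d) = r),
            W (c ⟨(i : ℕ) % d, lt_of_lt_of_le (Nat.mod_lt _ hd0) hdlen⟩) := by
            rw [Finset.prod_fiberwise_of_maps_to]
            intro i _
            exact Finset.mem_univ _
      _ = ∏ r : Fin d, W (c ⟨r.1, lt_of_lt_of_le r.2 hdlen⟩) ^ (n / d) := by
            apply Finset.prod_congr rfl
            intro r _
            rw [Finset.prod_congr rfl (g := fun _ => W (c ⟨r.1, lt_of_lt_of_le r.2 hdlen⟩))]
            · rw [Finset.prod_const]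
              congr 1
              rw [← mod_fiber_card n d hdn hd0 r]
              congr 1
              ext i
              simp [Fin.ext_iff]
            · intro i hi
              simp only [Finset.mem_filter, Finset.mem_univ, true_and] at hi
              have : (i : ℕ) % d = (r : ℕ) := by
                rw [← hi]
              congr 2
              exact Fin.ext this
  rw [main]
  rw [show (∑ h ∈ Fintype.piFinset fun _ : Fin d => Finset.range (k+1),
        ∏ r : Fin d, W (h r) ^ (n/d))
      = ∏ _r : Fin d, ∑ l ∈ Finset.range (k+1), W l ^ (n/d) from
    (Finset.prod_univ_sum _ (fun _ l => W l ^ (n/d))).symm]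
  rw [Finset.prod_const, Finset.card_univ, Fintype.card_fin]

lemma gF_fiber (n k : ℕ) [NeZero n] (τ : Fin n) (F : Fin n → Finset (Fin k)) (j : Fin n) :
    (Finset.univ.filter fun x : Fin n × Fin k =>
        (if x.2 ∈ F x.1 then x.1 else x.1 + τ) = j).card
      = (F j).card + (k - (F (j - τ)).card) := by
  classical
  have hset : (Finset.univ.filter fun x : Fin n × Fin k =>
        (if x.2 ∈ F x.1 then x.1 else x.1 + τ) = j)
      = ({j} ×ˢ F j) ∪ ({j - τ} ×ˢ (F (j - τ))ᶜ) := by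
    ext ⟨i, p⟩
    simp only [Finset.mem_filter, Finset.mem_univ, true_and, Finset.mem_union,
      Finset.mem_product, Finset.mem_singleton, Finset.mem_compl]
    by_cases hp : p ∈ F i
    · rw [if_pos hp]
      constructor
      · rintro rfl
        exact Or.inl ⟨rfl, hp⟩
      · rintro (⟨rfl, _⟩ | ⟨rfl, hnp⟩)
        · rfl
        · exact absurd hp hnp
    · rw [if_neg hp]
      constructor
      · rintro rfl
        refine Or.inr ⟨(add_sub_cancel_right i τ).symm, ?_⟩
        rwa [add_sub_cancel_right]
      · rintro (⟨rfl, hpj⟩ | ⟨rfl, _⟩)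
        · exact absurd hpj hp
        · exact sub_add_cancel j τ
  rw [hset, Finset.card_union_of_disjoint, Finset.card_product, Finset.card_product,
    Finset.card_singleton, Finset.card_compl, Fintype.card_fin]
  · simp
  rw [Finset.disjoint_left]
  rintro ⟨i, p⟩ h1 h2
  simp only [Finset.mem_product, Finset.mem_singleton, Finset.mem_compl] at h1 h2
  obtain ⟨hi1, hp1⟩ := h1
  obtain ⟨hi2, hp2⟩ := h2
  rw [hi1] at hi2
  rw [← hi2] at hp2
  exact hp2 hp1

end Aux

open Finset in
theorem stmt1 {R : Type*} [CommRing R] (n t k : ℕ) [NeZero n] (ht : 1 ≤ t) (hk : 1 ≤ k)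
    (a0 at' : R) :
    rectPer ((a0 • (1 : Matrix (Fin n) (Fin n) R) + at' • (Pcirc R n) ^ t) ⊗ₖ
        (Matrix.of fun (_ : Fin k) (_ : Fin k) => (1 : R))) =
      ((Nat.factorial k : R) ^ (n / Nat.gcd n t) * ∑ l ∈ Finset.range (k + 1),
          (Nat.choose k l : R) ^ (n / Nat.gcd n t) *
            (a0 ^ (k - l) * at' ^ l) ^ (n / Nat.gcd n t)) ^ (Nat.gcd n t) := by
  classical
  set τ : Fin n := (t : Fin n) with hτ
  set M := (a0 • (1 : Matrix (Fin n) (Fin n) R) + at' • (Pcirc R n) ^ t) ⊗ₖ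
        (Matrix.of fun (_ : Fin k) (_ : Fin k) => (1 : R)) with hM
  have hdn : Nat.gcd n t ∣ n := Nat.gcd_dvd_left n t
  have hn0 : 0 < n := Nat.pos_of_ne_zero (NeZero.ne n)
  have hA : ∀ (i j : Fin n), (a0 • (1 : Matrix (Fin n) (Fin n) R) + at' • (Pcirc R n) ^ t) i j
      = (if j = i then a0 else 0) + (if j = i + τ then at' else 0) := by
    intro i j
    rw [Matrix.add_apply, Matrix.smul_apply, Matrix.smul_apply, Matrix.one_apply,
      Pcirc_pow_apply, smul_eq_mul, smul_eq_mul]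
    congr 1
    · rcases eq_or_ne j i with h | h
      · subst h; simp
      · rw [if_neg (fun hh => h hh.symm), if_neg h, mul_zero]
    · rcases eq_or_ne j (i + τ) with h | h
      · subst h; simp [hτ]
      · rw [if_neg h, mul_zero, if_neg h]
  rw [rectPer_eq_sum_perm]
  -- Step 1: expand each permutation's product over choices F
  have key1 : ∀ σ : Equiv.Perm (Fin n × Fin k),
      (∏ x : Fin n × Fin k, M x (σ x))
      = ∑ F ∈ Fintype.piFinset (fun _ : Fin n => (Finset.univ : Finset (Fin k)).powerset),
          (∏ i : Fin n, a0 ^ (F i).card * at' ^ (k - (F i).card))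
            * ∏ x : Fin n × Fin k,
                (if (σ x).1 = (if x.2 ∈ F x.1 then x.1 else x.1 + τ) then (1:R) else 0) := by
    intro σ
    have e1 : ∀ x : Fin n × Fin k, M x (σ x)
        = (if (σ x).1 = x.1 then a0 else 0) + (if (σ x).1 = x.1 + τ then at' else 0) := by
      intro x
      rw [hM, Matrix.kroneckerMap_apply, Matrix.of_apply, mul_one, hA]
    calc (∏ x : Fin n × Fin k, M x (σ x))
        = ∏ x : Fin n × Fin k, ((if (σ x).1 = x.1 then a0 else 0)
            + (if (σ x).1 = x.1 + τ then at' else 0)) :=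
          Finset.prod_congr rfl (fun x _ => e1 x)
      _ = ∏ i : Fin n, ∏ p : Fin k, ((if (σ (i,p)).1 = i then a0 else 0)
            + (if (σ (i,p)).1 = i + τ then at' else 0)) := Fintype.prod_prod_type _
      _ = ∏ i : Fin n, ∑ T ∈ (Finset.univ : Finset (Fin k)).powerset,
            (∏ p ∈ T, (if (σ (i,p)).1 = i then a0 else 0)) *
            ∏ p ∈ Finset.univ \ T, (if (σ (i,p)).1 = i + τ then at' else 0) :=
          Finset.prod_congr rfl (fun i _ => Finset.prod_add _ _ _)
      _ = ∑ F ∈ Fintype.piFinset (fun _ : Fin n => (Finset.univ : Finset (Fin k)).powerset),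
            ∏ i : Fin n, ((∏ p ∈ F i, (if (σ (i,p)).1 = i then a0 else 0)) *
              ∏ p ∈ Finset.univ \ F i, (if (σ (i,p)).1 = i + τ then at' else 0)) :=
          Finset.prod_univ_sum _ _
      _ = ∑ F ∈ Fintype.piFinset (fun _ : Fin n => (Finset.univ : Finset (Fin k)).powerset),
          (∏ i : Fin n, a0 ^ (F i).card * at' ^ (k - (F i).card))
            * ∏ x : Fin n × Fin k,
                (if (σ x).1 = (if x.2 ∈ F x.1 then x.1 else x.1 + τ) then (1:R) else 0) := by
        apply Finset.sum_congr rfl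
        intro F _
        rw [show (∏ x : Fin n × Fin k,
              (if (σ x).1 = (if x.2 ∈ F x.1 then x.1 else x.1 + τ) then (1:R) else 0))
            = ∏ i : Fin n, ∏ p : Fin k,
              (if (σ (i,p)).1 = (if p ∈ F i then i else i + τ) then (1:R) else 0) from
          Fintype.prod_prod_type _]
        rw [← Finset.prod_mul_distrib]
        apply Finset.prod_congr rfl
        intro i _
        have hsub : F i ⊆ Finset.univ := Finset.subset_univ _
        have hcard : (Finset.univ \ F i).card = k - (F i).card := by
          rw [Finset.card_sdiff_of_subset hsub, Finset.card_univ, Fintype.card_fin]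
        have ha : (∏ p ∈ F i, (if (σ (i,p)).1 = i then a0 else 0))
            = a0 ^ (F i).card * ∏ p ∈ F i,
                (if (σ (i,p)).1 = (if p ∈ F i then i else i + τ) then (1:R) else 0) := by
          rw [← Finset.prod_const, ← Finset.prod_mul_distrib]
          apply Finset.prod_congr rfl
          intro p hp
          rw [if_pos hp]
          split_ifs <;> simp
        have hb : (∏ p ∈ Finset.univ \ F i, (if (σ (i,p)).1 = i + τ then at' else 0))
            = at' ^ (k - (F i).card) * ∏ p ∈ Finset.univ \ F i,
                (if (σ (i,p)).1 = (if p ∈ F i then i else i + τ) then (1:R) else 0) := by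
          rw [← hcard, ← Finset.prod_const, ← Finset.prod_mul_distrib]
          apply Finset.prod_congr rfl
          intro p hp
          rw [Finset.mem_sdiff] at hp
          rw [if_neg hp.2]
          split_ifs <;> simp
        rw [ha, hb, ← Finset.prod_sdiff hsub (f := fun p =>
          (if (σ (i,p)).1 = (if p ∈ F i then i else i + τ) then (1:R) else 0))]
        ring
  rw [Finset.sum_congr rfl (fun σ _ => key1 σ), Finset.sum_comm]
  -- Step 2: evaluate the inner sum over permutations
  have key2 : ∀ F : Fin n → Finset (Fin k),
      (∑ σ : Equiv.Perm (Fin n × Fin k),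
        (∏ i : Fin n, a0 ^ (F i).card * at' ^ (k - (F i).card))
          * ∏ x : Fin n × Fin k,
              (if (σ x).1 = (if x.2 ∈ F x.1 then x.1 else x.1 + τ) then (1:R) else 0))
      = (∏ i : Fin n, a0 ^ (F i).card * at' ^ (k - (F i).card))
          * (if (∀ j, (F (j + τ)).card = (F j).card) then ((k.factorial : R)) ^ n else 0) := by
    intro F
    rw [← Finset.mul_sum, count_lemma n k (fun x => if x.2 ∈ F x.1 then x.1 else x.1 + τ)]
    congr 1
    apply if_congr _ rfl rfl
    have hle : ∀ j : Fin n, (F j).card ≤ k := by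
      intro j
      simpa using Finset.card_le_univ (F j)
    constructor
    · intro h j
      have h1 := h (j + τ)
      rw [gF_fiber n k τ F (j + τ), add_sub_cancel_right] at h1
      have := hle (j + τ); have := hle j
      omega
    · intro h j
      rw [gF_fiber n k τ F j]
      have h1 := h (j - τ)
      rw [sub_add_cancel] at h1
      have := hle j; have := hle (j - τ)
      omega
  rw [Finset.sum_congr rfl (fun F _ => key2 F)]
  -- Step 3: group by cardinality vector
  have hmaps : ∀ F ∈ Fintype.piFinset (fun _ : Fin n => (Finset.univ : Finset (Fin k)).powerset),
      (fun i => (F i).card) ∈ Fintype.piFinset (fun _ : Fin n => Finset.range (k + 1)) := by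
    intro F _
    rw [Fintype.mem_piFinset]
    intro i
    rw [Finset.mem_range]
    have : (F i).card ≤ k := by simpa using Finset.card_le_univ (F i)
    omega
  rw [← Finset.sum_fiberwise_of_maps_to hmaps]
  -- Step 4: evaluate each fiber
  have key3 : ∀ c ∈ Fintype.piFinset (fun _ : Fin n => Finset.range (k + 1)),
      (∑ F ∈ (Fintype.piFinset (fun _ : Fin n => (Finset.univ : Finset (Fin k)).powerset)).filter
          (fun F => (fun i => (F i).card) = c),
        (∏ i : Fin n, a0 ^ (F i).card * at' ^ (k - (F i).card))
          * (if (∀ j, (F (j + τ)).card = (F j).card) then ((k.factorial : R)) ^ n else 0))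
      = ((k.factorial : R)) ^ n *
          (if (∀ j, c (j + τ) = c j)
            then ∏ i : Fin n, ((k.choose (c i) : R) * (a0 ^ (c i) * at' ^ (k - c i))) else 0) := by
    intro c hc
    have hterm : ∀ F ∈ (Fintype.piFinset (fun _ : Fin n =>
          (Finset.univ : Finset (Fin k)).powerset)).filter (fun F => (fun i => (F i).card) = c),
        (∏ i : Fin n, a0 ^ (F i).card * at' ^ (k - (F i).card))
          * (if (∀ j, (F (j + τ)).card = (F j).card) then ((k.factorial : R)) ^ n else 0)
        = (∏ i : Fin n, a0 ^ (c i) * at' ^ (k - c i))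
          * (if (∀ j, c (j + τ) = c j) then ((k.factorial : R)) ^ n else 0) := by
      intro F hF
      rw [Finset.mem_filter] at hF
      have hcc : ∀ i, (F i).card = c i := fun i => congrFun hF.2 i
      simp only [hcc]
    rw [Finset.sum_congr rfl hterm, Finset.sum_const]
    have hfilt : (Fintype.piFinset (fun _ : Fin n =>
          (Finset.univ : Finset (Fin k)).powerset)).filter (fun F => (fun i => (F i).card) = c)
        = Fintype.piFinset (fun i : Fin n => (Finset.univ : Finset (Fin k)).powersetCard (c i)) := by
      ext F
      simp [Fintype.mem_piFinset, Finset.mem_powersetCard, Finset.mem_powerset, funext_iff]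
    rw [hfilt, Fintype.card_piFinset]
    simp only [Finset.card_powersetCard, Finset.card_univ, Fintype.card_fin]
    rw [nsmul_eq_mul, Nat.cast_prod]
    split_ifs with hP
    · simp only [Finset.prod_mul_distrib]
      ring
    · simp
  rw [Finset.sum_congr rfl key3, ← Finset.mul_sum]
  simp only [hτ]
  rw [periodic_sum n t k (fun l => (k.choose l : R) * (a0 ^ l * at' ^ (k - l)))]
  have hfac : (k.factorial : R) ^ n = ((k.factorial : R) ^ (n / n.gcd t)) ^ (n.gcd t) := by
    rw [← pow_mul, Nat.div_mul_cancel hdn]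
  rw [hfac, ← mul_pow]
  congr 1
  congr 1
  rw [← Finset.sum_range_reflect
    (fun l => (k.choose l : R) ^ (n / n.gcd t) * (a0 ^ (k - l) * at' ^ l) ^ (n / n.gcd t)) (k+1)]
  apply Finset.sum_congr rfl
  intro l hl
  rw [Finset.mem_range] at hl
  have hlk : l ≤ k := by omega
  have h1 : k + 1 - 1 - l = k - l := by omega
  rw [mul_pow, h1, Nat.choose_symm hlk, Nat.sub_sub_self hlk]
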